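/- Let (A_l, B_l, C_l, D_l) be an ODE-LTI associated with the DAE d(Ex)/dt = Ax + Bu, with state map M = (EC_s)⁺ where C_s consists of the first n rows of C_l. If (x,u) is a solution of the DAE on interval I, then v := M·E·x is absolutely continuous, g := D_l⁺((x;u) − C_l·M·E·x) is locally integrable, and v̇ = A_l v + B_l g a.e. and (x;u) = C_l v + D_l g a.e. -/

import Mathlib

open MeasureTheory Set Filter Matrix

open Classical in
noncomputable def pinv {α β : Type} [Fintype α] [Fintype β] [DecidableEq α] [DecidableEq β]
    (M : Matrix α β ℝ) : Matrix β α ℝ :=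
  if h : ∃ X : Matrix β α ℝ,
      M * X * M = M ∧ X * M * X = X ∧ (M * X)ᵀ = M * X ∧ (X * M)ᵀ = X * M
  then h.choose else 0

def IsNiceInterval (I : Set ℝ) : Prop :=
  (∃ a b, I = Set.Icc a b) ∨ (∃ a, I = Set.Ici a) ∨ (∃ a, I = Set.Iic a) ∨ I = Set.univ

def IsDAESolution {c n m : ℕ} (E A : Matrix (Fin c) (Fin n) ℝ)
    (B : Matrix (Fin c) (Fin m) ℝ) (I : Set ℝ)
    (x : ℝ → Fin n → ℝ) (u : ℝ → Fin m → ℝ) : Prop :=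
  LocallyIntegrableOn x I ∧ LocallyIntegrableOn u I ∧
  ∀ t₀ ∈ I, ∀ t ∈ I, t₀ ≤ t →
    E.mulVec (x t) = E.mulVec (x t₀) + ∫ s in t₀..t, (A.mulVec (x s) + B.mulVec (u s))

def IsStateTraj {r : ℕ} {σ : Type} [Fintype σ] (Al : Matrix (Fin r) (Fin r) ℝ)
    (Bl : Matrix (Fin r) σ ℝ)
    (I : Set ℝ) (p : ℝ → Fin r → ℝ) (g : ℝ → σ → ℝ) : Prop :=
  LocallyIntegrableOn p I ∧ LocallyIntegrableOn g I ∧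
  ∀ t₀ ∈ I, ∀ t ∈ I, t₀ ≤ t →
    p t = p t₀ + ∫ τ in t₀..t, (Al.mulVec (p τ) + Bl.mulVec (g τ))

def RealizesOn {c n m nh k : ℕ} (E A : Matrix (Fin c) (Fin n) ℝ) (B : Matrix (Fin c) (Fin m) ℝ)
    (Al : Matrix (Fin nh) (Fin nh) ℝ) (Bl : Matrix (Fin nh) (Fin k) ℝ)
    (Cl : Matrix (Fin n ⊕ Fin m) (Fin nh) ℝ) (Dl : Matrix (Fin n ⊕ Fin m) (Fin k) ℝ)
    (I : Set ℝ) : Prop :=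
  (∀ x u, IsDAESolution E A B I x u →
    ∃ p g, IsStateTraj Al Bl I p g ∧
      ∀ᵐ t ∂(volume.restrict I), Sum.elim (x t) (u t) = Cl.mulVec (p t) + Dl.mulVec (g t)) ∧
  (∀ p g, IsStateTraj Al Bl I p g →
    ∃ x u, IsDAESolution E A B I x u ∧
      ∀ᵐ t ∂(volume.restrict I), Sum.elim (x t) (u t) = Cl.mulVec (p t) + Dl.mulVec (g t))

def firstRows {n m nh : ℕ} (Cl : Matrix (Fin n ⊕ Fin m) (Fin nh) ℝ) :
    Matrix (Fin n) (Fin nh) ℝ :=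
  Matrix.of fun i j => Cl (Sum.inl i) j

def IsAssociated {c n m nh k : ℕ} (E A : Matrix (Fin c) (Fin n) ℝ)
    (B : Matrix (Fin c) (Fin m) ℝ)
    (Al : Matrix (Fin nh) (Fin nh) ℝ) (Bl : Matrix (Fin nh) (Fin k) ℝ)
    (Cl : Matrix (Fin n ⊕ Fin m) (Fin nh) ℝ) (Dl : Matrix (Fin n ⊕ Fin m) (Fin k) ℝ) : Prop :=
  nh ≤ n ∧
  ((Dl = 0 ∧ Bl = 0 ∧ k = 1) ∨ Dl.rank = k) ∧
  E * firstRows Dl = 0 ∧ (E * firstRows Cl).rank = nh ∧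
  ∀ I : Set ℝ, IsNiceInterval I → RealizesOn E A B Al Bl Cl Dl I

def ConsistencySet {c n m : ℕ} (E A : Matrix (Fin c) (Fin n) ℝ)
    (B : Matrix (Fin c) (Fin m) ℝ) : Set (Fin c → ℝ) :=
  {z | ∃ I : Set ℝ, IsNiceInterval I ∧ (0 : ℝ) ∈ I ∧
    ∃ x u, IsDAESolution E A B I x u ∧ E.mulVec (x 0) = z}

lemma pinv_mul_eq_one {α β : Type} [Fintype α] [Fintype β] [DecidableEq α] [DecidableEq β]
    (M : Matrix α β ℝ) (h : M.rank = Fintype.card β) : pinv M * M = 1 := by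
  -- `MᵀM` is invertible
  have hker : LinearMap.ker M.mulVecLin = ⊥ := by
    have h1 := LinearMap.finrank_range_add_finrank_ker M.mulVecLin
    rw [Module.finrank_pi] at h1
    have : M.rank + Module.finrank ℝ (LinearMap.ker M.mulVecLin) = Fintype.card β := h1
    rw [h] at this
    have h0 : Module.finrank ℝ (LinearMap.ker M.mulVecLin) = 0 := by omega
    exact Submodule.finrank_eq_zero.mp h0
  have hker2 : LinearMap.ker (Mᵀ * M).mulVecLin = ⊥ := by
    rw [Matrix.ker_mulVecLin_transpose_mul_self]; exact hker
  have hinj : Function.Injective (Mᵀ * M).mulVec := by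
    have h2 := LinearMap.ker_eq_bot.mp hker2
    intro a b hab
    exact h2 (show (Mᵀ * M).mulVecLin a = (Mᵀ * M).mulVecLin b by
      rw [Matrix.mulVecLin_apply, Matrix.mulVecLin_apply]; exact hab)
  have hU : IsUnit (Mᵀ * M) := Matrix.mulVec_injective_iff_isUnit.mp hinj
  have hdet : IsUnit (Mᵀ * M).det := (Matrix.isUnit_iff_isUnit_det _).mp hU
  set N := (Mᵀ * M)⁻¹ with hNdef
  have hNM : N * (Mᵀ * M) = 1 := Matrix.nonsing_inv_mul _ hdet
  have hsymm : Nᵀ = N := by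
    rw [hNdef, Matrix.transpose_nonsing_inv, Matrix.transpose_mul, Matrix.transpose_transpose]
  have hXM : N * Mᵀ * M = 1 := by rw [Matrix.mul_assoc]; exact hNM
  have hex : ∃ X : Matrix β α ℝ,
      M * X * M = M ∧ X * M * X = X ∧ (M * X)ᵀ = M * X ∧ (X * M)ᵀ = X * M := by
    refine ⟨N * Mᵀ, ?_, ?_, ?_, ?_⟩
    · rw [Matrix.mul_assoc M _ M, hXM, Matrix.mul_one]
    · rw [hXM, Matrix.one_mul]
    · simp only [Matrix.transpose_mul, Matrix.transpose_transpose, hsymm, Matrix.mul_assoc]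
    · rw [hXM]; simp
  rw [pinv, dif_pos hex]
  obtain ⟨h1, -, -, -⟩ := hex.choose_spec
  calc hex.choose * M = N * Mᵀ * M * (hex.choose * M) := by rw [hXM, Matrix.one_mul]
    _ = N * Mᵀ * (M * hex.choose * M) := by
        simp only [Matrix.mul_assoc]
    _ = N * Mᵀ * M := by rw [h1]
    _ = 1 := hXM

lemma IsNiceInterval.measurableSet {I : Set ℝ} (hI : IsNiceInterval I) : MeasurableSet I := by
  rcases hI with ⟨a, b, rfl⟩ | ⟨a, rfl⟩ | ⟨a, rfl⟩ | rfl
  · exact measurableSet_Icc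
  · exact measurableSet_Ici
  · exact measurableSet_Iic
  · exact MeasurableSet.univ

lemma IsNiceInterval.ordConnected {I : Set ℝ} (hI : IsNiceInterval I) : I.OrdConnected := by
  rcases hI with ⟨a, b, rfl⟩ | ⟨a, rfl⟩ | ⟨a, rfl⟩ | rfl
  · exact ordConnected_Icc
  · exact ordConnected_Ici
  · exact ordConnected_Iic
  · exact ordConnected_univ

lemma locInt_clm {E F : Type*} [NormedAddCommGroup E] [NormedSpace ℝ E]
    [NormedAddCommGroup F] [NormedSpace ℝ F] {f : ℝ → E} {s : Set ℝ}
    (hf : LocallyIntegrableOn f s volume) (L : E →L[ℝ] F) :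
    LocallyIntegrableOn (fun t => L (f t)) s volume := by
  intro x hx
  obtain ⟨u, hu, hint⟩ := hf x hx
  exact ⟨u, hu, L.integrable_comp hint⟩

noncomputable def mvCLM {α β : Type} [Fintype α] [Fintype β] (M : Matrix α β ℝ) :
    (β → ℝ) →L[ℝ] (α → ℝ) :=
  LinearMap.toContinuousLinearMap M.mulVecLin

@[simp] lemma mvCLM_apply {α β : Type} [Fintype α] [Fintype β] (M : Matrix α β ℝ) (v : β → ℝ) :
    mvCLM M v = M.mulVec v := rfl

lemma locInt_mulVec {α β : Type} [Fintype α] [Fintype β] {f : ℝ → β → ℝ}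
    {s : Set ℝ} (hf : LocallyIntegrableOn f s volume) (M : Matrix α β ℝ) :
    LocallyIntegrableOn (fun t => M.mulVec (f t)) s volume := by
  simpa using locInt_clm hf (mvCLM M)

lemma locInt_add {α : Type} [Fintype α] {f g : ℝ → α → ℝ} {s : Set ℝ}
    (hf : LocallyIntegrableOn f s volume) (hg : LocallyIntegrableOn g s volume) :
    LocallyIntegrableOn (fun t => f t + g t) s volume := hf.add hg

lemma locInt_sub {α : Type} [Fintype α] {f g : ℝ → α → ℝ} {s : Set ℝ}
    (hf : LocallyIntegrableOn f s volume) (hg : LocallyIntegrableOn g s volume) :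
    LocallyIntegrableOn (fun t => f t - g t) s volume := hf.sub hg

lemma locInt_sumElim {n m : ℕ} {x : ℝ → Fin n → ℝ} {u : ℝ → Fin m → ℝ} {s : Set ℝ}
    (hx : LocallyIntegrableOn x s volume) (hu : LocallyIntegrableOn u s volume) :
    LocallyIntegrableOn (fun t => Sum.elim (x t) (u t)) s volume := by
  let L1 : (Fin n → ℝ) →L[ℝ] (Fin n ⊕ Fin m → ℝ) :=
    LinearMap.toContinuousLinearMap
      { toFun := fun v => Sum.elim v 0
        map_add' := fun v w => by funext i; cases i <;> simp
        map_smul' := fun c v => by funext i; cases i <;> simp }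
  let L2 : (Fin m → ℝ) →L[ℝ] (Fin n ⊕ Fin m → ℝ) :=
    LinearMap.toContinuousLinearMap
      { toFun := fun v => Sum.elim 0 v
        map_add' := fun v w => by funext i; cases i <;> simp
        map_smul' := fun c v => by funext i; cases i <;> simp }
  have h12 := locInt_add (locInt_clm hx L1) (locInt_clm hu L2)
  have heq : (fun t => Sum.elim (x t) (u t)) = fun t => L1 (x t) + L2 (u t) := by
    funext t i
    cases i <;> simp [L1, L2]
  rw [heq]
  exact h12

lemma locInt_intervalIntegrable {E : Type*} [NormedAddCommGroup E] {f : ℝ → E} {s : Set ℝ} {a b : ℝ}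
    (hf : LocallyIntegrableOn f s volume) (hab : a ≤ b) (hsub : Set.Icc a b ⊆ s) :
    IntervalIntegrable f volume a b := by
  have := hf.integrableOn_compact_subset hsub isCompact_Icc
  rw [← Set.uIcc_of_le hab] at this
  exact this.intervalIntegrable

lemma eqOn_zero_of_ae_zero {X : Type*} [NormedAddCommGroup X] {a b : ℝ} (hab : a < b)
    {φ : ℝ → X} (hc : ContinuousOn φ (Set.Icc a b))
    (hae : ∀ᵐ s ∂(volume.restrict (Set.Icc a b)), φ s = 0) :
    ∀ s ∈ Set.Icc a b, φ s = 0 := by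
  intro s₀ hs₀
  have hae' : ∀ᵐ s ∂(volume : Measure ℝ), s ∈ Set.Icc a b → φ s = 0 :=
    (ae_restrict_iff' measurableSet_Icc).mp hae
  have hnull : volume {s : ℝ | ¬ (s ∈ Set.Icc a b → φ s = 0)} = 0 := hae'
  have hfreq : ∃ᶠ s in nhdsWithin s₀ (Set.Icc a b), φ s = (fun _ => (0 : X)) s := by
    rw [Filter.frequently_iff]
    intro U hU
    obtain ⟨V, hVopen, hs₀V, hVU⟩ := mem_nhdsWithin.mp hU
    obtain ⟨ε, hε, hball⟩ := Metric.isOpen_iff.mp hVopen s₀ hs₀V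
    rw [Real.ball_eq_Ioo] at hball
    set cc := max a (s₀ - ε) with hcc
    set dd := min b (s₀ + ε) with hdd
    have hcd : cc < dd := by
      rcases lt_or_eq_of_le hs₀.2 with h | h
      · apply max_lt <;> apply lt_min
        · exact hab
        · linarith [hs₀.1]
        · linarith
        · linarith
      · apply max_lt <;> apply lt_min
        · exact hab
        · linarith [hs₀.1]
        · linarith
        · linarith
    have hsubIcc : Set.Ioo cc dd ⊆ Set.Icc a b := fun y hy =>
      ⟨le_trans (le_max_left _ _) hy.1.le, le_trans hy.2.le (min_le_left _ _)⟩
    have hsubV : Set.Ioo cc dd ⊆ V := fun y hy => hball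
      ⟨lt_of_le_of_lt (le_max_right _ _) hy.1, lt_of_lt_of_le hy.2 (min_le_right _ _)⟩
    have hpos : volume (Set.Ioo cc dd) ≠ 0 := by
      rw [Real.volume_Ioo]
      simp only [ne_eq, ENNReal.ofReal_eq_zero, not_le]
      linarith
    have hns : ¬ (Set.Ioo cc dd ⊆ {s : ℝ | ¬ (s ∈ Set.Icc a b → φ s = 0)}) :=
      fun hsub => hpos (measure_mono_null hsub hnull)
    obtain ⟨y, hy, hyN⟩ := Set.not_subset.mp hns
    simp only [Set.mem_setOf_eq, not_not] at hyN
    exact ⟨y, hVU ⟨hsubV hy, hsubIcc hy⟩, hyN (hsubIcc hy)⟩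
  have hne : (nhdsWithin s₀ (Set.Icc a b)).NeBot :=
    mem_closure_iff_nhdsWithin_neBot.mp (subset_closure hs₀)
  exact tendsto_nhds_unique_of_frequently_eq (hc s₀ hs₀) tendsto_const_nhds hfreq

/-- Theorem (dae2lin:theo_main), first half: if `(x,u)` solves the DAE, then
`v = M·E·x` and `g = D_l⁺((x;u) − C_l·M·E·x)` form a state/input trajectory of the
associated ODE-LTI whose output reproduces `(x;u)` a.e. -/
theorem dae_solution_gives_ode_trajectory {c n m nh k : ℕ}
    (E A : Matrix (Fin c) (Fin n) ℝ) (B : Matrix (Fin c) (Fin m) ℝ)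
    (Al : Matrix (Fin nh) (Fin nh) ℝ) (Bl : Matrix (Fin nh) (Fin k) ℝ)
    (Cl : Matrix (Fin n ⊕ Fin m) (Fin nh) ℝ) (Dl : Matrix (Fin n ⊕ Fin m) (Fin k) ℝ)
    (hassoc : IsAssociated E A B Al Bl Cl Dl)
    (I : Set ℝ) (hI : IsNiceInterval I)
    (x : ℝ → Fin n → ℝ) (u : ℝ → Fin m → ℝ)
    (hsol : IsDAESolution E A B I x u) :
    IsStateTraj Al Bl I
      (fun t => (pinv (E * firstRows Cl)).mulVec (E.mulVec (x t)))
      (fun t => (pinv Dl).mulVec (Sum.elim (x t) (u t) -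
        Cl.mulVec ((pinv (E * firstRows Cl)).mulVec (E.mulVec (x t))))) ∧
    ∀ᵐ t ∂(volume.restrict I),
      Sum.elim (x t) (u t) =
        Cl.mulVec ((pinv (E * firstRows Cl)).mulVec (E.mulVec (x t))) +
        Dl.mulVec ((pinv Dl).mulVec (Sum.elim (x t) (u t) -
          Cl.mulVec ((pinv (E * firstRows Cl)).mulVec (E.mulVec (x t))))) := by
  classical
  obtain ⟨hnh, hDB, hED, hrankN, hreal⟩ := hassoc
  obtain ⟨hx, hu, hdae⟩ := hsol
  have hMN : pinv (E * firstRows Cl) * (E * firstRows Cl) = 1 :=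
    pinv_mul_eq_one _ (by simpa using hrankN)
  obtain ⟨p, g, ⟨hp, hg, hode⟩, hae⟩ := (hreal I hI).1 x u ⟨hx, hu, hdae⟩
  have hImeas := hI.measurableSet
  have hae' : ∀ᵐ t ∂(volume : Measure ℝ), t ∈ I →
      Sum.elim (x t) (u t) = Cl.mulVec (p t) + Dl.mulVec (g t) :=
    (ae_restrict_iff' hImeas).mp hae
  -- a.e., the candidate state equals `p`
  have hvp : ∀ᵐ t ∂(volume : Measure ℝ), t ∈ I →
      (pinv (E * firstRows Cl)).mulVec (E.mulVec (x t)) = p t := by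
    filter_upwards [hae'] with t ht
    intro hIt
    have h := ht hIt
    have hxt : x t = (firstRows Cl).mulVec (p t) + (firstRows Dl).mulVec (g t) := by
      funext i
      have h' := congrFun h (Sum.inl i)
      simpa [Matrix.mulVec, dotProduct, firstRows] using h'
    rw [hxt, Matrix.mulVec_add, Matrix.mulVec_mulVec, Matrix.mulVec_mulVec, hED,
      Matrix.zero_mulVec, add_zero, Matrix.mulVec_mulVec, hMN, Matrix.one_mulVec]
  -- a.e., the candidate input reproduces `g` through `Bl` and `Dl`
  have hgf : ∀ᵐ t ∂(volume : Measure ℝ), t ∈ I →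
      (Bl.mulVec ((pinv Dl).mulVec (Sum.elim (x t) (u t) -
          Cl.mulVec ((pinv (E * firstRows Cl)).mulVec (E.mulVec (x t))))) = Bl.mulVec (g t) ∧
       Dl.mulVec ((pinv Dl).mulVec (Sum.elim (x t) (u t) -
          Cl.mulVec ((pinv (E * firstRows Cl)).mulVec (E.mulVec (x t))))) = Dl.mulVec (g t)) := by
    filter_upwards [hae', hvp] with t h1 h2
    intro hIt
    have hsub : Sum.elim (x t) (u t) -
        Cl.mulVec ((pinv (E * firstRows Cl)).mulVec (E.mulVec (x t))) = Dl.mulVec (g t) := by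
      rw [h2 hIt, h1 hIt, add_sub_cancel_left]
    rw [hsub]
    rcases hDB with ⟨hD0, hB0, -⟩ | hrk
    · constructor
      · rw [hB0]; simp
      · rw [hD0]; simp
    · have hDl1 : pinv Dl * Dl = 1 := pinv_mul_eq_one Dl (by simpa using hrk)
      have key : (pinv Dl).mulVec (Dl.mulVec (g t)) = g t := by
        rw [Matrix.mulVec_mulVec, hDl1, Matrix.one_mulVec]
      rw [key]
      exact ⟨rfl, rfl⟩
  have hvloc : LocallyIntegrableOn
      (fun t => (pinv (E * firstRows Cl)).mulVec (E.mulVec (x t))) I volume :=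
    locInt_mulVec (locInt_mulVec hx E) (pinv (E * firstRows Cl))
  have hg'loc : LocallyIntegrableOn
      (fun t => (pinv Dl).mulVec (Sum.elim (x t) (u t) -
        Cl.mulVec ((pinv (E * firstRows Cl)).mulVec (E.mulVec (x t))))) I volume :=
    locInt_mulVec (locInt_sub (locInt_sumElim hx hu) (locInt_mulVec hvloc Cl)) (pinv Dl)
  refine ⟨⟨hvloc, hg'loc, ?_⟩, ?_⟩
  · -- the integral identity
    intro t₀ ht₀ t ht hle
    rcases eq_or_lt_of_le hle with rfl | hlt
    · simp
    have hsubI : Set.Icc t₀ t ⊆ I := (hI.ordConnected).out' ht₀ ht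
    have hh₀ : LocallyIntegrableOn (fun τ => A.mulVec (x τ) + B.mulVec (u τ)) I volume :=
      locInt_add (locInt_mulVec hx A) (locInt_mulVec hu B)
    have hMh₀ : LocallyIntegrableOn (fun τ =>
        (pinv (E * firstRows Cl)).mulVec (A.mulVec (x τ) + B.mulVec (u τ))) I volume :=
      locInt_mulVec hh₀ _
    have hpgint : LocallyIntegrableOn (fun τ => Al.mulVec (p τ) + Bl.mulVec (g τ)) I volume :=
      locInt_add (locInt_mulVec hp Al) (locInt_mulVec hg Bl)
    have hvrep : ∀ s₁ ∈ I, ∀ s₂ ∈ I, s₁ ≤ s₂ →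
        (pinv (E * firstRows Cl)).mulVec (E.mulVec (x s₂)) =
          (pinv (E * firstRows Cl)).mulVec (E.mulVec (x s₁)) +
            ∫ τ in s₁..s₂, (pinv (E * firstRows Cl)).mulVec
              (A.mulVec (x τ) + B.mulVec (u τ)) := by
      intro s₁ h1 s₂ h2 h12
      have hint : IntervalIntegrable (fun τ => A.mulVec (x τ) + B.mulVec (u τ)) volume s₁ s₂ :=
        locInt_intervalIntegrable hh₀ h12 ((hI.ordConnected).out' h1 h2)
      have hcomm := (mvCLM (pinv (E * firstRows Cl))).intervalIntegral_comp_comm hint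
      simp only [mvCLM_apply] at hcomm
      rw [hdae s₁ h1 s₂ h2 h12, Matrix.mulVec_add, hcomm]
    have hψint : IntegrableOn (fun τ =>
        (pinv (E * firstRows Cl)).mulVec (A.mulVec (x τ) + B.mulVec (u τ)) -
          (Al.mulVec (p τ) + Bl.mulVec (g τ))) (Set.Icc t₀ t) volume :=
      (locInt_sub hMh₀ hpgint).integrableOn_compact_subset hsubI isCompact_Icc
    have hGcont : ContinuousOn (fun s => ∫ τ in t₀..s,
        ((pinv (E * firstRows Cl)).mulVec (A.mulVec (x τ) + B.mulVec (u τ)) -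
          (Al.mulVec (p τ) + Bl.mulVec (g τ)))) (Set.Icc t₀ t) := by
      rw [← Set.uIcc_of_le hle]
      apply intervalIntegral.continuousOn_primitive_interval
      rw [Set.uIcc_of_le hle]; exact hψint
    have hΦrep : ∀ s ∈ Set.Icc t₀ t,
        (pinv (E * firstRows Cl)).mulVec (E.mulVec (x s)) - p s =
          ((pinv (E * firstRows Cl)).mulVec (E.mulVec (x t₀)) - p t₀) +
            ∫ τ in t₀..s, ((pinv (E * firstRows Cl)).mulVec (A.mulVec (x τ) + B.mulVec (u τ)) -
              (Al.mulVec (p τ) + Bl.mulVec (g τ))) := by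
      intro s hs
      have h1 := hvrep t₀ ht₀ s (hsubI hs) hs.1
      have h2 := hode t₀ ht₀ s (hsubI hs) hs.1
      have hIccs : Set.Icc t₀ s ⊆ I :=
        Set.Subset.trans (Set.Icc_subset_Icc_right hs.2) hsubI
      have hint1 : IntervalIntegrable (fun τ =>
          (pinv (E * firstRows Cl)).mulVec (A.mulVec (x τ) + B.mulVec (u τ))) volume t₀ s :=
        locInt_intervalIntegrable hMh₀ hs.1 hIccs
      have hint2 : IntervalIntegrable (fun τ => Al.mulVec (p τ) + Bl.mulVec (g τ)) volume t₀ s :=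
        locInt_intervalIntegrable hpgint hs.1 hIccs
      rw [h1, h2, intervalIntegral.integral_sub hint1 hint2]
      abel
    have haez : ∀ᵐ s ∂(volume.restrict (Set.Icc t₀ t)),
        (((pinv (E * firstRows Cl)).mulVec (E.mulVec (x t₀)) - p t₀) +
          ∫ τ in t₀..s, ((pinv (E * firstRows Cl)).mulVec (A.mulVec (x τ) + B.mulVec (u τ)) -
            (Al.mulVec (p τ) + Bl.mulVec (g τ)))) = 0 := by
      filter_upwards [ae_restrict_of_ae hvp, ae_restrict_mem measurableSet_Icc] with s h1 h2
      rw [← hΦrep s h2, h1 (hsubI h2), sub_self]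
    have hzero := eqOn_zero_of_ae_zero hlt (continuousOn_const.add hGcont) haez
    have hz0 : (pinv (E * firstRows Cl)).mulVec (E.mulVec (x t₀)) = p t₀ := by
      have h1 := hzero t₀ ⟨le_refl _, hle⟩
      simp only [Pi.add_apply, intervalIntegral.integral_same, add_zero] at h1
      exact sub_eq_zero.mp h1
    have hzt : (pinv (E * firstRows Cl)).mulVec (E.mulVec (x t)) = p t := by
      have h1 := hzero t ⟨hle, le_refl _⟩
      have h2 := (hΦrep t ⟨hle, le_refl _⟩).trans h1
      exact sub_eq_zero.mp h2
    have hcong : (∫ τ in t₀..t,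
        (Al.mulVec ((pinv (E * firstRows Cl)).mulVec (E.mulVec (x τ))) +
          Bl.mulVec ((pinv Dl).mulVec (Sum.elim (x τ) (u τ) -
            Cl.mulVec ((pinv (E * firstRows Cl)).mulVec (E.mulVec (x τ))))))) =
        ∫ τ in t₀..t, (Al.mulVec (p τ) + Bl.mulVec (g τ)) := by
      apply intervalIntegral.integral_congr_ae
      filter_upwards [hvp, hgf] with τ h1 h2
      intro hmem
      rw [Set.uIoc_of_le hle] at hmem
      have hτI : τ ∈ I := hsubI (Set.Ioc_subset_Icc_self hmem)
      rw [(h2 hτI).1, h1 hτI]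
    show (pinv (E * firstRows Cl)).mulVec (E.mulVec (x t)) =
      (pinv (E * firstRows Cl)).mulVec (E.mulVec (x t₀)) +
        ∫ τ in t₀..t,
          (Al.mulVec ((pinv (E * firstRows Cl)).mulVec (E.mulVec (x τ))) +
            Bl.mulVec ((pinv Dl).mulVec (Sum.elim (x τ) (u τ) -
              Cl.mulVec ((pinv (E * firstRows Cl)).mulVec (E.mulVec (x τ))))))
    rw [hcong, hzt, hz0]
    exact hode t₀ ht₀ t ht hle
  · -- the a.e. output identity
    have h1 := (ae_restrict_iff' hImeas).mpr hvp
    have h2 := (ae_restrict_iff' hImeas).mpr hgf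
    filter_upwards [hae, h1, h2] with t hs hv hgf2
    rw [hgf2.2, hv]
    exact hs
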